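/- Let B ≥ 2, let A_0,...,A_{B−1} be d×d complex matrices, Q their sum, J the ν×ν Jordan cell with eigenvalue λ ≠ 0, and F: ℝ → ℂ^{d×ν} continuous with F(x) = 0 for x ≤ 0, F(x) = V for x ≥ 1 (Q·V = V·J), satisfying F(x)·J = Σ_b A_b·F(Bx − b). Assume that B^ℓ·λ is not an eigenvalue of Q for any ℓ ≥ 1. Then the moments M_ℓ = ∫_0^1 F(z) z^{ℓ−1} dz satisfy the recursion B^ℓ·M_ℓ·J − Q·M_ℓ = (1/ℓ)·Σ_{b=0}^{B−2} (B^ℓ − (b+1)^ℓ)·A_b·V + Σ_{k=1}^{ℓ−1} binomial(ℓ−1, k−1)·(Σ_{r=0}^{B−1} r^{ℓ−k} A_r)·M_k, and this recursion determines all M_ℓ uniquely. -/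

import Mathlib

open Matrix intervalIntegral

/-- The `ν×ν` upper-triangular Jordan cell with eigenvalue `lam`. -/
def jordanCell (ν : ℕ) (lam : ℂ) : Matrix (Fin ν) (Fin ν) ℂ :=
  Matrix.of fun i j => if i = j then lam else if (j : ℕ) = (i : ℕ) + 1 then 1 else 0

/-- The moment recursion
`B^ℓ M_ℓ J − Q M_ℓ = (1/ℓ)Σ_{b=0}^{B−2}(B^ℓ−(b+1)^ℓ)A_bV
 + Σ_{k=1}^{ℓ−1} C(ℓ−1,k−1)(Σ_r r^{ℓ−k}A_r)M_k`. -/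
def MomentRec (B d ν : ℕ) (A : ℕ → Matrix (Fin d) (Fin d) ℂ)
    (Q : Matrix (Fin d) (Fin d) ℂ) (J : Matrix (Fin ν) (Fin ν) ℂ)
    (V : Matrix (Fin d) (Fin ν) ℂ) (M : ℕ → Matrix (Fin d) (Fin ν) ℂ)
    (ℓ : ℕ) : Prop :=
  (B : ℂ) ^ ℓ • (M ℓ * J) - Q * M ℓ =
    ((1 : ℂ) / ℓ) • (∑ b ∈ Finset.range (B - 1),
        ((B : ℂ) ^ ℓ - ((b : ℂ) + 1) ^ ℓ) • (A b * V))
    + ∑ k ∈ Finset.Icc 1 (ℓ - 1),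
        (((ℓ - 1).choose (k - 1) : ℂ)) •
          ((∑ r ∈ Finset.range B, ((r : ℂ)) ^ (ℓ - k) • A r) * M k)

lemma contAux (b : ℂ) (n : ℕ) : Continuous (fun y : ℝ => ((y:ℂ)+b)^n) :=
  (Complex.continuous_ofReal.add continuous_const).pow n

lemma hasDerivAux (b : ℂ) (n : ℕ) (y : ℝ) :
    HasDerivAt (fun x : ℝ => ((x:ℂ)+b)^(n+1) / (n+1)) (((y:ℂ)+b)^n) y := by
  have h : HasDerivAt (fun w : ℂ => (w+b)^(n+1) / ((n:ℂ)+1)) (((y:ℂ)+b)^n) (y:ℂ) := by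
    have h1 := (((hasDerivAt_id ((y:ℂ))).add_const b).pow (n+1)).div_const ((n:ℂ)+1)
    have hn : ((n:ℂ)+1) ≠ 0 := Nat.cast_add_one_ne_zero n
    refine h1.congr_deriv ?_
    simp only [id, Nat.add_sub_cancel]; push_cast; field_simp
  have := h.comp_ofReal
  simpa using this

lemma integralPow (b : ℂ) (n : ℕ) (c : ℝ) :
    ∫ y in (1:ℝ)..c, ((y:ℂ)+b)^n
      = ((c:ℂ)+b)^(n+1)/((n:ℂ)+1) - ((1:ℂ)+b)^(n+1)/((n:ℂ)+1) := by
  have := intervalIntegral.integral_eq_sub_of_hasDerivAt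
    (fun y _ => hasDerivAux b n y) ((contAux b n).intervalIntegrable 1 c)
  simpa using this

lemma substA (B b n : ℕ) (hB : 2 ≤ B) (hb : b < B)
    (g : ℝ → ℂ) (hg : Continuous g) (hg0 : ∀ x ≤ (0:ℝ), g x = 0) (v : ℂ)
    (hg1 : ∀ x ≥ (1:ℝ), g x = v) :
    ∫ z in (0:ℝ)..1, g ((B:ℝ)*z - b) * (z:ℂ)^n
      = ((B:ℂ)^(n+1))⁻¹ *
        ((∫ y in (0:ℝ)..1, g y * ((y:ℂ)+b)^n)
          + v * (((B:ℂ)^(n+1) - ((b:ℂ)+1)^(n+1))/((n:ℂ)+1))) := by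
  have hBpos : 0 < B := lt_of_lt_of_le (by norm_num) hB
  have hBR : (B:ℝ) ≠ 0 := by positivity
  have hBC : (B:ℂ) ≠ 0 := by exact_mod_cast (Nat.cast_ne_zero (R := ℂ)).2 hBpos.ne'
  set h : ℝ → ℂ := fun y => g y * ((y:ℂ)+b)^n with hh
  have hhc : Continuous h := hg.mul (contAux b n)
  have step1 : ∀ z : ℝ, g ((B:ℝ)*z - b) * (z:ℂ)^n = ((B:ℂ)^n)⁻¹ * h ((B:ℝ)*z - b) := by
    intro z
    have e1 : (((B:ℝ)*z - b : ℝ) : ℂ) + b = (B:ℂ)*(z:ℂ) := by push_cast; ring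
    simp only [hh, e1, mul_pow]
    have hBn : ((B:ℂ))^n ≠ 0 := pow_ne_zero _ hBC
    field_simp
  have hsub : ∫ z in (0:ℝ)..1, h ((B:ℝ)*z - b)
      = (B:ℝ)⁻¹ • ∫ y in (-(b:ℝ))..((B:ℝ)-b), h y := by
    rw [intervalIntegral.integral_comp_mul_sub h hBR (b:ℝ)]
    norm_num
  have hbneg : (-(b:ℝ)) ≤ 0 := neg_nonpos.mpr (by positivity)
  have hb1 : (1:ℝ) ≤ (B:ℝ) - b := by
    have : (b:ℝ) + 1 ≤ B := by exact_mod_cast hb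
    linarith
  have hsplit : ∫ y in (-(b:ℝ))..((B:ℝ)-b), h y
      = (∫ y in (-(b:ℝ))..(0:ℝ), h y) + (∫ y in (0:ℝ)..1, h y)
        + (∫ y in (1:ℝ)..((B:ℝ)-b), h y) := by
    rw [intervalIntegral.integral_add_adjacent_intervals
        (hhc.intervalIntegrable _ _) (hhc.intervalIntegrable _ _),
      intervalIntegral.integral_add_adjacent_intervals
        (hhc.intervalIntegrable _ _) (hhc.intervalIntegrable _ _)]
  have p1 : ∫ y in (-(b:ℝ))..(0:ℝ), h y = 0 := by
    have e : Set.EqOn h (fun _ => (0:ℂ)) (Set.uIcc (-(b:ℝ)) 0) := by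
      intro y hy
      rw [Set.uIcc_of_le hbneg] at hy
      simp [hh, hg0 y hy.2]
    rw [intervalIntegral.integral_congr e]
    simp
  have p3 : ∫ y in (1:ℝ)..((B:ℝ)-b), h y
      = v * (((B:ℂ)^(n+1) - ((b:ℂ)+1)^(n+1))/((n:ℂ)+1)) := by
    have e : Set.EqOn h (fun y => v * ((y:ℂ)+b)^n) (Set.uIcc (1:ℝ) ((B:ℝ)-b)) := by
      intro y hy
      rw [Set.uIcc_of_le hb1] at hy
      simp [hh, hg1 y hy.1]
    rw [intervalIntegral.integral_congr e, intervalIntegral.integral_const_mul,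
      integralPow]
    have e2 : ((((B:ℝ)-(b:ℝ)) : ℝ):ℂ) + (b:ℂ) = (B:ℂ) := by push_cast; ring
    rw [e2, add_comm (1:ℂ) (b:ℂ)]
    ring
  simp only [step1]
  rw [intervalIntegral.integral_const_mul, hsub, hsplit, p1, p3]
  rw [Complex.real_smul]
  push_cast
  rw [zero_add, pow_succ, mul_inv]
  ring

lemma binomB (b n : ℕ) (g : ℝ → ℂ) (hg : Continuous g) :
    ∫ y in (0:ℝ)..1, g y * ((y:ℂ)+b)^n
      = ∑ k ∈ Finset.range (n+1),
          ((n.choose k : ℂ) * (b:ℂ)^(n-k)) * ∫ y in (0:ℝ)..1, g y * (y:ℂ)^k := by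
  have e : ∀ y : ℝ, g y * ((y:ℂ)+b)^n
      = ∑ k ∈ Finset.range (n+1),
          ((n.choose k : ℂ) * (b:ℂ)^(n-k)) * (g y * (y:ℂ)^k) := by
    intro y
    rw [add_pow, Finset.mul_sum]
    exact Finset.sum_congr rfl fun k _ => by ring
  simp only [e]
  rw [intervalIntegral.integral_finset_sum]
  · exact Finset.sum_congr rfl fun k _ => intervalIntegral.integral_const_mul _ _
  · intro k _
    exact (continuous_const.mul (hg.mul (Complex.continuous_ofReal.pow k))).intervalIntegrable _ _

lemma stepMJ (B d ν : ℕ) (A : ℕ → Matrix (Fin d) (Fin d) ℂ) (J : Matrix (Fin ν) (Fin ν) ℂ)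
    (F : ℝ → Matrix (Fin d) (Fin ν) ℂ) (hFc : Continuous F)
    (hdil : ∀ x : ℝ, F x * J = ∑ b ∈ Finset.range B, A b * F ((B:ℝ)*x - b)) (n : ℕ) :
    (Matrix.of fun i j => ∫ z in (0:ℝ)..1, F z i j * (z:ℂ)^n) * J
      = ∑ b ∈ Finset.range B,
          A b * Matrix.of (fun i j => ∫ z in (0:ℝ)..1, F ((B:ℝ)*z - b) i j * (z:ℂ)^n) := by
  have contF : ∀ (i : Fin d) (j : Fin ν), Continuous fun z => F z i j :=
    fun i j => hFc.matrix_elem i j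
  have contD : ∀ (b : ℕ) (t : Fin d) (j : Fin ν),
      Continuous fun z : ℝ => F ((B:ℝ)*z - b) t j := fun b t j =>
    (contF t j).comp ((continuous_const.mul continuous_id).sub continuous_const)
  ext i j
  rw [Matrix.mul_apply]
  calc ∑ t, (Matrix.of fun i j => ∫ z in (0:ℝ)..1, F z i j * (z:ℂ)^n) i t * J t j
      = ∑ t, ∫ z in (0:ℝ)..1, F z i t * (z:ℂ)^n * J t j := by
        refine Finset.sum_congr rfl fun t _ => ?_
        rw [Matrix.of_apply, ← intervalIntegral.integral_mul_const]
    _ = ∫ z in (0:ℝ)..1, ∑ t, F z i t * (z:ℂ)^n * J t j := by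
        refine (intervalIntegral.integral_finset_sum fun t _ => ?_).symm
        exact (((contF i t).mul (Complex.continuous_ofReal.pow n)).mul
          continuous_const).intervalIntegrable _ _
    _ = ∫ z in (0:ℝ)..1, (F z * J) i j * (z:ℂ)^n := by
        refine intervalIntegral.integral_congr fun z _ => ?_
        rw [Matrix.mul_apply, Finset.sum_mul]
        exact Finset.sum_congr rfl fun t _ => by ring
    _ = ∫ z in (0:ℝ)..1,
          ∑ b ∈ Finset.range B, ∑ t, A b i t * (F ((B:ℝ)*z - b) t j * (z:ℂ)^n) := by
        refine intervalIntegral.integral_congr fun z _ => ?_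
        rw [hdil z, Matrix.sum_apply, Finset.sum_mul]
        refine Finset.sum_congr rfl fun b _ => ?_
        rw [Matrix.mul_apply, Finset.sum_mul]
        exact Finset.sum_congr rfl fun t _ => by ring
    _ = ∑ b ∈ Finset.range B, ∑ t, A b i t * ∫ z in (0:ℝ)..1,
          F ((B:ℝ)*z - b) t j * (z:ℂ)^n := by
        rw [intervalIntegral.integral_finset_sum]
        · refine Finset.sum_congr rfl fun b _ => ?_
          rw [intervalIntegral.integral_finset_sum]
          · exact Finset.sum_congr rfl fun t _ =>
              intervalIntegral.integral_const_mul _ _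
          · intro t _
            exact (continuous_const.mul ((contD b t j).mul
              (Complex.continuous_ofReal.pow n))).intervalIntegrable _ _
        · intro b _
          apply Continuous.intervalIntegrable
          exact continuous_finset_sum _ fun t _ => continuous_const.mul
            ((contD b t j).mul (Complex.continuous_ofReal.pow n))
    _ = (∑ b ∈ Finset.range B,
          A b * Matrix.of (fun i j => ∫ z in (0:ℝ)..1, F ((B:ℝ)*z - b) i j * (z:ℂ)^n)) i j := by
        rw [Matrix.sum_apply]
        exact Finset.sum_congr rfl fun b _ => by rw [Matrix.mul_apply]; rfl

lemma stepW (B d ν : ℕ) (hB : 2 ≤ B) (b : ℕ) (hb : b < B)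
    (V : Matrix (Fin d) (Fin ν) ℂ)
    (F : ℝ → Matrix (Fin d) (Fin ν) ℂ) (hFc : Continuous F)
    (hF0 : ∀ x ≤ (0:ℝ), F x = 0) (hF1 : ∀ x ≥ (1:ℝ), F x = V) (n : ℕ) :
    (Matrix.of fun i j => ∫ z in (0:ℝ)..1, F ((B:ℝ)*z - b) i j * (z:ℂ)^n)
      = ((B:ℂ)^(n+1))⁻¹ •
        ((∑ k ∈ Finset.range (n+1), ((n.choose k : ℂ) * (b:ℂ)^(n-k)) •
            Matrix.of (fun i j => ∫ z in (0:ℝ)..1, F z i j * (z:ℂ)^k))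
          + (((B:ℂ)^(n+1) - ((b:ℂ)+1)^(n+1))/((n:ℂ)+1)) • V) := by
  ext i j
  have h := substA B b n hB hb (fun z => F z i j) (hFc.matrix_elem i j)
    (fun x hx => by show F x i j = 0; rw [hF0 x hx]; rfl) (V i j) (fun x hx => by show F x i j = V i j; rw [hF1 x hx])
  rw [Matrix.of_apply, h, binomB b n _ (hFc.matrix_elem i j)]
  simp only [Matrix.smul_apply, Matrix.add_apply, Matrix.sum_apply, Matrix.of_apply,
    smul_eq_mul]
  ring

theorem moments_recursion
    (B d ν : ℕ) (hB : 2 ≤ B) (hν : 0 < ν)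
    (A : ℕ → Matrix (Fin d) (Fin d) ℂ)
    (Q : Matrix (Fin d) (Fin d) ℂ) (hQ : Q = ∑ b ∈ Finset.range B, A b)
    (lam : ℂ) (hlam : lam ≠ 0)
    (heig : ∀ ℓ : ℕ, 1 ≤ ℓ →
      ((((B : ℂ) ^ ℓ * lam) • (1 : Matrix (Fin d) (Fin d) ℂ)) - Q).det ≠ 0)
    (V : Matrix (Fin d) (Fin ν) ℂ) (hQV : Q * V = V * jordanCell ν lam)
    (F : ℝ → Matrix (Fin d) (Fin ν) ℂ)
    (hFc : Continuous F) (hF0 : ∀ x ≤ (0 : ℝ), F x = 0)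
    (hF1 : ∀ x ≥ (1 : ℝ), F x = V)
    (hdil : ∀ x : ℝ, F x * jordanCell ν lam =
      ∑ b ∈ Finset.range B, A b * F ((B : ℝ) * x - b))
    (M : ℕ → Matrix (Fin d) (Fin ν) ℂ)
    (hM : ∀ ℓ, M ℓ = Matrix.of
      fun i j => ∫ z in (0 : ℝ)..1, F z i j * (z : ℂ) ^ (ℓ - 1)) :
    (∀ ℓ : ℕ, 1 ≤ ℓ → MomentRec B d ν A Q (jordanCell ν lam) V M ℓ) ∧
    (∀ M' : ℕ → Matrix (Fin d) (Fin ν) ℂ,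
      (∀ ℓ : ℕ, 1 ≤ ℓ → MomentRec B d ν A Q (jordanCell ν lam) V M' ℓ) →
      ∀ ℓ : ℕ, 1 ≤ ℓ → M' ℓ = M ℓ) := by
  have hMof : ∀ k : ℕ, M (k+1) = Matrix.of
      fun i j => ∫ z in (0:ℝ)..1, F z i j * (z:ℂ)^k := by
    intro k; rw [hM (k+1)]; norm_num
  have hBC : (B:ℂ) ≠ 0 := by
    have h0 : B ≠ 0 := by omega
    exact_mod_cast Nat.cast_ne_zero.2 h0
  have hex : ∀ ℓ : ℕ, 1 ≤ ℓ → MomentRec B d ν A Q (jordanCell ν lam) V M ℓ := by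
    intro ℓ hℓ
    obtain ⟨n, rfl⟩ : ∃ n, ℓ = n + 1 := ⟨ℓ - 1, by omega⟩
    unfold MomentRec
    have key : ((B:ℂ)^(n+1)) • (M (n+1) * jordanCell ν lam)
        = ∑ b ∈ Finset.range B,
            ((∑ k ∈ Finset.range (n+1),
                ((n.choose k : ℂ) * (b:ℂ)^(n-k)) • (A b * M (k+1)))
              + (((B:ℂ)^(n+1) - ((b:ℂ)+1)^(n+1))/((n:ℂ)+1)) • (A b * V)) := by
      rw [hMof n, stepMJ B d ν A (jordanCell ν lam) F hFc hdil n, Finset.smul_sum]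
      refine Finset.sum_congr rfl fun b hb => ?_
      rw [stepW B d ν hB b (Finset.mem_range.mp hb) V F hFc hF0 hF1 n,
        Matrix.mul_smul, smul_smul, mul_inv_cancel₀ (pow_ne_zero _ hBC), one_smul,
        Matrix.mul_add, Matrix.mul_smul, Matrix.mul_sum]
      congr 1
      refine Finset.sum_congr rfl fun k _ => ?_
      rw [Matrix.mul_smul, hMof k]
    have key2 : ((B:ℂ)^(n+1)) • (M (n+1) * jordanCell ν lam) - Q * M (n+1)
        = (∑ b ∈ Finset.range B, ∑ k ∈ Finset.range n,
            ((n.choose k : ℂ) * (b:ℂ)^(n-k)) • (A b * M (k+1)))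
          + ∑ b ∈ Finset.range B,
              (((B:ℂ)^(n+1) - ((b:ℂ)+1)^(n+1))/((n:ℂ)+1)) • (A b * V) := by
      rw [key, Finset.sum_add_distrib, hQ, Matrix.sum_mul]
      have hlastterm : ∀ b ∈ Finset.range B,
          ∑ k ∈ Finset.range (n+1), ((n.choose k : ℂ) * (b:ℂ)^(n-k)) • (A b * M (k+1))
            = (∑ k ∈ Finset.range n, ((n.choose k : ℂ) * (b:ℂ)^(n-k)) • (A b * M (k+1)))
              + A b * M (n+1) := by
        intro b _
        rw [Finset.sum_range_succ]
        simp [Nat.choose_self]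
      rw [Finset.sum_congr rfl hlastterm, Finset.sum_add_distrib]
      abel
    have hd : ∑ b ∈ Finset.range B,
          (((B:ℂ)^(n+1) - ((b:ℂ)+1)^(n+1))/((n:ℂ)+1)) • (A b * V)
        = ((1:ℂ)/((n+1:ℕ):ℂ)) • ∑ b ∈ Finset.range (B-1),
            ((B:ℂ)^(n+1) - ((b:ℂ)+1)^(n+1)) • (A b * V) := by
      rw [Finset.smul_sum,
        show (Finset.range B) = Finset.range ((B-1)+1) by congr 1; omega,
        Finset.sum_range_succ]
      have hcast : ((B-1:ℕ):ℂ) + 1 = (B:ℂ) := by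
        have h1 : (1:ℕ) ≤ B := by omega
        push_cast [Nat.cast_sub h1]
        try ring
      rw [hcast, sub_self, zero_div, zero_smul, add_zero]
      refine Finset.sum_congr rfl fun b _ => ?_
      rw [smul_smul]
      congr 1
      push_cast
      rw [one_div, inv_mul_eq_div]
    have hk : ∑ b ∈ Finset.range B, ∑ k ∈ Finset.range n,
          ((n.choose k : ℂ) * (b:ℂ)^(n-k)) • (A b * M (k+1))
        = ∑ k ∈ Finset.Icc 1 ((n+1)-1), ((((n+1)-1).choose (k-1) : ℂ)) •
            ((∑ r ∈ Finset.range B, ((r:ℂ))^((n+1)-k) • A r) * M k) := by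
      rw [Finset.sum_comm]
      rw [show Finset.Icc 1 ((n+1)-1) = Finset.Ico 1 (n+1) by
        rw [Nat.add_sub_cancel, Finset.Ico_add_one_right_eq_Icc]]
      rw [Finset.sum_Ico_eq_sum_range]
      refine Finset.sum_congr (by norm_num) fun k hk => ?_
      have e1 : (1+k) - 1 = k := by omega
      have e2 : (n+1) - (1+k) = n - k := by omega
      have e3 : (n+1) - 1 = n := by omega
      rw [e1, e2, e3, add_comm 1 k]
      rw [Matrix.sum_mul, Finset.smul_sum]
      refine Finset.sum_congr rfl fun b _ => ?_
      rw [Matrix.smul_mul, smul_smul]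
    rw [key2, hd, hk, add_comm]
  refine ⟨hex, ?_⟩
  intro M' hM' ℓ
  induction ℓ using Nat.strong_induction_on with
  | _ ℓ IH =>
    intro hℓ
    have h1 := hM' ℓ hℓ
    have h2 := hex ℓ hℓ
    unfold MomentRec at h1 h2
    have hsum : ∑ k ∈ Finset.Icc 1 (ℓ-1), (((ℓ-1).choose (k-1) : ℂ)) •
          ((∑ r ∈ Finset.range B, ((r:ℂ))^(ℓ-k) • A r) * M' k)
        = ∑ k ∈ Finset.Icc 1 (ℓ-1), (((ℓ-1).choose (k-1) : ℂ)) •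
          ((∑ r ∈ Finset.range B, ((r:ℂ))^(ℓ-k) • A r) * M k) := by
      refine Finset.sum_congr rfl fun k hk => ?_
      obtain ⟨hk1, hk2⟩ := Finset.mem_Icc.mp hk
      rw [IH k (by omega) hk1]
    rw [hsum] at h1
    have heq : (B:ℂ)^ℓ • (M' ℓ * jordanCell ν lam) - Q * M' ℓ
        = (B:ℂ)^ℓ • (M ℓ * jordanCell ν lam) - Q * M ℓ := h1.trans h2.symm
    set E : Matrix (Fin d) (Fin ν) ℂ := M' ℓ - M ℓ with hEdef
    have hE : (B:ℂ)^ℓ • (E * jordanCell ν lam) - Q * E = 0 := by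
      rw [hEdef, Matrix.sub_mul, smul_sub, Matrix.mul_sub, sub_sub_sub_comm, heq,
        sub_self]
    have hdetU : IsUnit ((((B:ℂ)^ℓ * lam) • (1 : Matrix (Fin d) (Fin d) ℂ)) - Q).det :=
      isUnit_iff_ne_zero.2 (heig ℓ hℓ)
    have jsplit : ∀ t j : Fin ν, jordanCell ν lam t j
        = lam * (if t = j then 1 else 0) + (if (j:ℕ) = (t:ℕ)+1 then (1:ℂ) else 0) := by
      intro t j
      by_cases h : t = j
      · subst h
        simp only [jordanCell, Matrix.of_apply, if_pos rfl, mul_one]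
        rw [if_neg (Nat.lt_succ_self _).ne]
        simp
      · simp [jordanCell, h]
    have hcol : ∀ m : ℕ, ∀ j : Fin ν, (j:ℕ) = m → ∀ i, E i j = 0 := by
      intro m
      induction m using Nat.strong_induction_on with
      | _ m IHm =>
        intro j hj i
        have hsup : ∀ i' : Fin d,
            ∑ t, E i' t * (if (j:ℕ) = (t:ℕ)+1 then (1:ℂ) else 0) = 0 := by
          intro i'
          refine Finset.sum_eq_zero fun t _ => ?_
          by_cases hc : (j:ℕ) = (t:ℕ)+1
          · rw [IHm (t:ℕ) (by omega) t rfl i', zero_mul]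
          · simp [hc]
        have hEJ : ∀ i' : Fin d, (E * jordanCell ν lam) i' j = lam * E i' j := by
          intro i'
          rw [Matrix.mul_apply]
          simp only [jsplit, mul_add, Finset.sum_add_distrib, hsup i', add_zero]
          simp [mul_ite, Finset.sum_ite_eq', mul_comm]
        have hvec : (((B:ℂ)^ℓ * lam) • (1 : Matrix (Fin d) (Fin d) ℂ) - Q) *ᵥ
            (fun i' => E i' j) = 0 := by
          funext i'
          have e0 : (B:ℂ)^ℓ * ((E * jordanCell ν lam) i' j) - (Q*E) i' j = 0 := by
            have h3 := congrFun (congrFun hE i') j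
            simpa using h3
          rw [hEJ i', Matrix.mul_apply] at e0
          simp only [Matrix.mulVec, dotProduct, Pi.zero_apply, Matrix.sub_apply,
            Matrix.smul_apply, Matrix.one_apply, smul_eq_mul, sub_mul,
            Finset.sum_sub_distrib, mul_ite, mul_one, mul_zero, ite_mul, zero_mul,
            Finset.sum_ite_eq]
          simp only [Finset.mem_univ, if_pos]
          linear_combination e0
        have hzero : (fun i' => E i' j) = 0 := by
          have hinv := Matrix.nonsing_inv_mul _ hdetU
          have h4 := congrArg
            (fun w => ((((B:ℂ)^ℓ * lam) • (1 : Matrix (Fin d) (Fin d) ℂ) - Q)⁻¹) *ᵥ w)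
            hvec
          simpa [Matrix.mulVec_mulVec, hinv] using h4
        exact congrFun hzero i
    have hE0 : E = 0 := by
      ext i j
      exact hcol (j:ℕ) j rfl i
    have := sub_eq_zero.mp (hEdef ▸ hE0)
    exact this
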